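/- The category of supported sets over A is cocomplete, and the forgetful functor to Set preserves all colimits; the colimit of a diagram is the colimit of underlying sets, with support of a colimit element c given by the intersection of s(y) over all elements y in the diagram mapped to c by a colimit injection. -/

import Mathlib

open CategoryTheory

/-- A supported set over `A`: a set with a finite support for each element. -/
structure SuppSet (A : Type) : Type 1 where
  carrier : Type
  supp : carrier → Set A
  finite : ∀ x, (supp x).Finite

variable {A : Type}

instance : Category (SuppSet A) where
  Hom X Y := {f : X.carrier → Y.carrier // ∀ x, Y.supp (f x) ⊆ X.supp x}
  id _ := ⟨fun x => x, fun _ => subset_rfl⟩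
  comp f g := ⟨fun x => g.1 (f.1 x), fun x => (g.2 _).trans (f.2 x)⟩
  id_comp _ := Subtype.ext rfl
  comp_id _ := Subtype.ext rfl
  assoc _ _ _ := Subtype.ext rfl

/-- The forgetful functor from supported sets to sets. -/
def Forget (A : Type) : SuppSet A ⥤ Type where
  obj X := X.carrier
  map f := TypeCat.ofHom f.1
  map_id _ := rfl
  map_comp _ _ := rfl

open CategoryTheory.Limits

section Aux
variable {J : Type} [Category.{0} J] (D : J ⥤ SuppSet A)

noncomputable def suppColimPt : SuppSet A where
  carrier := colimit (D ⋙ Forget A)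
  supp p := ⋂₀ {S : Set A | ∃ (j : J) (y : (D.obj j).carrier),
      colimit.ι (D ⋙ Forget A) j y = p ∧ S = (D.obj j).supp y}
  finite p := by
    obtain ⟨j, y, hy⟩ := Types.jointly_surjective' p
    exact ((D.obj j).finite y).subset (Set.sInter_subset_of_mem ⟨j, y, hy, rfl⟩)

noncomputable def suppColimCocone : Cocone D where
  pt := suppColimPt D
  ι :=
    { app := fun j => ⟨⇑(colimit.ι (D ⋙ Forget A) j), fun y =>
        Set.sInter_subset_of_mem ⟨j, y, rfl, rfl⟩⟩
      naturality := fun j j' f => Subtype.ext (by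
        funext y
        exact ConcreteCategory.congr_hom (colimit.w (D ⋙ Forget A) f) y) }

noncomputable def suppColimIsColimit : IsColimit (suppColimCocone D) where
  desc E := ⟨⇑(colimit.desc (D ⋙ Forget A) ((Forget A).mapCocone E)), by
    intro p a ha
    refine Set.mem_sInter.mpr ?_
    rintro S ⟨j, y, hy, rfl⟩
    have h1 : colimit.desc (D ⋙ Forget A) ((Forget A).mapCocone E) p = (E.ι.app j).1 y := by
      rw [← hy]
      exact ConcreteCategory.congr_hom (colimit.ι_desc ((Forget A).mapCocone E) j) y
    exact (E.ι.app j).2 y (h1 ▸ ha)⟩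
  fac E j := Subtype.ext (funext fun y => ConcreteCategory.congr_hom (colimit.ι_desc ((Forget A).mapCocone E) j) y)
  uniq E m hm := Subtype.ext (by
    funext p
    obtain ⟨j, y, rfl⟩ := Types.jointly_surjective' (F := D ⋙ Forget A) p
    have h2 := congrFun (congrArg Subtype.val (hm j)) y
    exact h2.trans (ConcreteCategory.congr_hom (colimit.ι_desc ((Forget A).mapCocone E) j) y).symm)

end Aux

instance suppHasColimits : HasColimits (SuppSet A) where
  has_colimits_of_shape _ _ :=
    { has_colimit := fun D => HasColimit.mk ⟨_, suppColimIsColimit D⟩ }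

noncomputable instance suppForgetPreserves : PreservesColimits (Forget A) where
  preservesColimitsOfShape {J} _ :=
    { preservesColimit := fun {D} =>
        preservesColimit_of_preserves_colimit_cocone (suppColimIsColimit D)
          ((colimit.isColimit (D ⋙ Forget A)).ofIsoColimit
            (Cocones.ext (Iso.refl _) (by intro j; rfl))) }


open Limits in
/-- `Supp(A)` is cocomplete, the forgetful functor preserves all colimits,
and the support of an element `p` of a colimit is the intersection of the supports of
all elements of the diagram mapped to `p` by a colimit injection. -/
theorem suppSet_cocomplete_forget_preserves_colimits (A : Type) :
    HasColimits (SuppSet A) ∧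
    Nonempty (PreservesColimits (Forget A)) ∧
    (∀ (J : Type) (_ : SmallCategory J) (D : J ⥤ SuppSet A)
        (c : Cocone D) (_ : IsColimit c) (p : c.pt.carrier),
      c.pt.supp p = ⋂₀ {S : Set A | ∃ (j : J) (y : (D.obj j).carrier),
        (c.ι.app j).1 y = p ∧ S = (D.obj j).supp y}) := by
  refine ⟨suppHasColimits, ⟨suppForgetPreserves⟩, ?_⟩
  intro J _ D c hc p
  set φ := IsColimit.coconePointUniqueUpToIso hc (suppColimIsColimit D) with hφ
  have hretr : ∀ x, φ.inv.1 (φ.hom.1 x) = x :=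
    fun x => congrFun (congrArg Subtype.val φ.hom_inv_id) x
  have hinj : Function.Injective φ.hom.1 := fun a b h => by
    rw [← hretr a, h, hretr b]
  have happ : ∀ (j : J) (y : (D.obj j).carrier),
      φ.hom.1 ((c.ι.app j).1 y) = colimit.ι (D ⋙ Forget A) j y := fun j y =>
    congrFun (congrArg Subtype.val
      (hc.comp_coconePointUniqueUpToIso_hom (suppColimIsColimit D) j)) y
  have hs1 : c.pt.supp p = (suppColimPt D).supp (φ.hom.1 p) := by
    refine Set.Subset.antisymm ?_ (φ.hom.2 p)
    have h := φ.inv.2 (φ.hom.1 p)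
    rwa [hretr p] at h
  have hset : {S : Set A | ∃ (j : J) (y : (D.obj j).carrier),
        colimit.ι (D ⋙ Forget A) j y = φ.hom.1 p ∧ S = (D.obj j).supp y} =
      {S : Set A | ∃ (j : J) (y : (D.obj j).carrier),
        (c.ι.app j).1 y = p ∧ S = (D.obj j).supp y} := by
    ext S
    constructor
    · rintro ⟨j, y, hy, rfl⟩
      exact ⟨j, y, hinj (by rw [happ j y, hy]), rfl⟩
    · rintro ⟨j, y, hy, rfl⟩
      exact ⟨j, y, by rw [← hy, happ], rfl⟩
  rw [hs1]
  exact congrArg Set.sInter hset
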